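/- Let σ > 0 and define the Gini mean semi-difference Gini(X) = ∫_{−∞}^∞ [F_X(x) − F_X(x)²] dx. Then sup over X ∈ V_S(μ,σ) of Gini(X), sup over X ∈ V_U(μ,σ) of Gini(X), and sup over X ∈ V_SU(μ,σ) of Gini(X) are all equal to σ/√3; over V_S(μ,σ) the supremum is attained by the uniform distribution on [μ−√3σ, μ+√3σ], i.e. by X_* with quantile function F_{X_*}^{-1}(u) = μ + √3·σ·(2u−1). -/

import Mathlib

open MeasureTheory Set

noncomputable section

variable {Ω : Type*} [MeasureSpace Ω]

/-- The (right-continuous) cumulative distribution function of a random variable. -/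
def cdfRV (X : Ω → ℝ) (t : ℝ) : ℝ := ((volume : Measure Ω) {ω | X ω ≤ t}).toReal

/-- The survival function `x ↦ P(X > x)` of a random variable. -/
def sfRV (X : Ω → ℝ) (t : ℝ) : ℝ := ((volume : Measure Ω) {ω | t < X ω}).toReal

/-- The left-continuous quantile function `F_X^{-1}(p) = inf {x | F_X x ≥ p}`. -/
def quantileRV (X : Ω → ℝ) (p : ℝ) : ℝ := sInf {x : ℝ | p ≤ cdfRV X x}

/-- A random variable is unimodal if its cdf is convex on `(-∞, x₀)` and concave on
`(x₀, ∞)` for some mode `x₀`. -/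
def Unimodal (X : Ω → ℝ) : Prop :=
  ∃ x₀ : ℝ, ConvexOn ℝ (Iio x₀) (cdfRV X) ∧ ConcaveOn ℝ (Ioi x₀) (cdfRV X)

/-- `X` is symmetric about `c`: `X - c` and `c - X` are equal in distribution. -/
def SymmAbout (X : Ω → ℝ) (c : ℝ) : Prop :=
  Measure.map (fun ω => X ω - c) (volume : Measure Ω) =
    Measure.map (fun ω => c - X ω) (volume : Measure Ω)

/-- `X` is symmetric (about some point). -/
def SymmetricRV (X : Ω → ℝ) : Prop := ∃ c : ℝ, SymmAbout X c

/-- `V(μ, σ)`: random variables with mean `μ` and variance `σ²`. -/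
def Vset (μ σ : ℝ) : Set (Ω → ℝ) :=
  {X | Measurable X ∧ Integrable X (volume : Measure Ω) ∧
    (∫ ω, X ω ∂(volume : Measure Ω)) = μ ∧
    Integrable (fun ω => (X ω - μ) ^ 2) (volume : Measure Ω) ∧
    (∫ ω, (X ω - μ) ^ 2 ∂(volume : Measure Ω)) = σ ^ 2}

/-- `V_U(μ, σ)`: unimodal members of `V(μ, σ)`. -/
def VU (μ σ : ℝ) : Set (Ω → ℝ) := {X | X ∈ Vset μ σ ∧ Unimodal X}

/-- `V_S(μ, σ)`: members of `V(μ, σ)` symmetric about the mean `μ`. -/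
def VS (μ σ : ℝ) : Set (Ω → ℝ) := {X | X ∈ Vset μ σ ∧ SymmAbout X μ}

/-- `V_{SU}(μ, σ)`: symmetric and unimodal members of `V(μ, σ)`. -/
def VSU (μ σ : ℝ) : Set (Ω → ℝ) := {X | X ∈ Vset μ σ ∧ SymmAbout X μ ∧ Unimodal X}

/-- The distortion riskmetric `ρ_g`. -/
def rho (g : ℝ → ℝ) (X : Ω → ℝ) : ℝ :=
  (∫ x in Iio (0 : ℝ), (g (sfRV X x) - g 1)) + ∫ x in Ioi (0 : ℝ), g (sfRV X x)

/-- The entropy `∫ g(P(X > x)) dx`. -/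
def entropyRV (g : ℝ → ℝ) (X : Ω → ℝ) : ℝ := ∫ x : ℝ, g (sfRV X x)

/-- The weighted entropy `∫ ψ(x) g(P(X > x)) dx`. -/
def wentropyRV (ψ g : ℝ → ℝ) (X : Ω → ℝ) : ℝ := ∫ x : ℝ, ψ x * g (sfRV X x)

/-- `g ∈ 𝒢`: `g` is of bounded variation on `[0,1]` with `g 0 = 0`. -/
def memG (g : ℝ → ℝ) : Prop := BoundedVariationOn g (Icc 0 1) ∧ g 0 = 0

/-- `ĝ(u) = g(1) - g(1-u)`. -/
def hatg (g : ℝ → ℝ) : ℝ → ℝ := fun u => g 1 - g (1 - u)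

/-- The convex envelope on `[0,1]`: the largest convex function below `k` on `[0,1]`. -/
def convexEnvelope (k : ℝ → ℝ) : ℝ → ℝ := fun x =>
  sSup {y : ℝ | ∃ h : ℝ → ℝ, ConvexOn ℝ (Icc (0:ℝ) 1) h ∧
    (∀ u ∈ Icc (0:ℝ) 1, h u ≤ k u) ∧ y = h x}

/-- The concave envelope on `[0,1]`: the smallest concave function above `k` on `[0,1]`. -/
def concaveEnvelope (k : ℝ → ℝ) : ℝ → ℝ := fun x =>
  sInf {y : ℝ | ∃ h : ℝ → ℝ, ConcaveOn ℝ (Icc (0:ℝ) 1) h ∧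
    (∀ u ∈ Icc (0:ℝ) 1, k u ≤ h u) ∧ y = h x}

/-- The right derivative. -/
def rderiv (f : ℝ → ℝ) (x : ℝ) : ℝ := derivWithin f (Ici x) x

/-- Tail value-at-risk / expected shortfall at level `α`. -/
def TVaR (α : ℝ) (X : Ω → ℝ) : ℝ := (1 - α)⁻¹ * ∫ u in α..1, quantileRV X u

/-- The probability space is rich enough to support a uniformly distributed random
variable (a consequence of atomlessness used throughout). -/
def Rich (Ω : Type*) [MeasureSpace Ω] : Prop :=
  ∃ U : Ω → ℝ, Measurable U ∧
    Measure.map U (volume : Measure Ω) = volume.restrict (Ioo (0:ℝ) 1)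


/-- The Gini mean semi-difference. -/
def giniRV (X : Ω → ℝ) : ℝ := ∫ x : ℝ, (cdfRV X x - (cdfRV X x) ^ 2)

end


section AuxGini

open ProbabilityTheory Filter Topology

variable {Ω : Type*} [MeasureSpace Ω] [IsProbabilityMeasure (volume : Measure Ω)]

lemma cdfRV_eq_cdf {X : Ω → ℝ} (hX : Measurable X) (t : ℝ) :
    cdfRV X t = cdf (Measure.map X volume) t := by
  have : IsProbabilityMeasure (Measure.map X (volume : Measure Ω)) :=
    Measure.isProbabilityMeasure_map hX.aemeasurable
  rw [cdf_eq_real, cdfRV, measureReal_def, Measure.map_apply hX measurableSet_Iic]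
  rfl

lemma quantile_set_nonempty {X : Ω → ℝ} (hX : Measurable X) {p : ℝ} (hp1 : p < 1) :
    {y : ℝ | p ≤ cdfRV X y}.Nonempty := by
  have : IsProbabilityMeasure (Measure.map X (volume : Measure Ω)) :=
    Measure.isProbabilityMeasure_map hX.aemeasurable
  have h2 : ∀ᶠ y in atTop, p ≤ cdf (Measure.map X volume) y :=
    (tendsto_cdf_atTop (Measure.map X volume)).eventually (eventually_ge_nhds hp1)
  obtain ⟨y, hy⟩ := h2.exists
  exact ⟨y, by rw [Set.mem_setOf_eq, cdfRV_eq_cdf hX]; exact hy⟩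

lemma quantile_set_bddBelow {X : Ω → ℝ} (hX : Measurable X) {p : ℝ} (hp0 : 0 < p) :
    BddBelow {y : ℝ | p ≤ cdfRV X y} := by
  have : IsProbabilityMeasure (Measure.map X (volume : Measure Ω)) :=
    Measure.isProbabilityMeasure_map hX.aemeasurable
  have h2 : ∀ᶠ y in atBot, cdf (Measure.map X volume) y < p :=
    (tendsto_cdf_atBot (Measure.map X volume)).eventually (eventually_lt_nhds hp0)
  obtain ⟨z, hz⟩ := eventually_atBot.mp h2
  refine ⟨z, fun y hy => ?_⟩
  by_contra hzy
  push_neg at hzy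
  have := hz y hzy.le
  rw [Set.mem_setOf_eq, cdfRV_eq_cdf hX] at hy
  linarith

lemma quantile_galois {X : Ω → ℝ} (hX : Measurable X) {p : ℝ} (hp0 : 0 < p) (hp1 : p < 1)
    (x : ℝ) : quantileRV X p ≤ x ↔ p ≤ cdfRV X x := by
  have hprob : IsProbabilityMeasure (Measure.map X (volume : Measure Ω)) :=
    Measure.isProbabilityMeasure_map hX.aemeasurable
  set F := cdf (Measure.map X volume) with hFdef
  have hF : ∀ t, cdfRV X t = F t := cdfRV_eq_cdf hX
  have hSeq : {y : ℝ | p ≤ cdfRV X y} = {y : ℝ | p ≤ F y} := by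
    ext y; simp [hF]
  have hne : {y : ℝ | p ≤ F y}.Nonempty := hSeq ▸ quantile_set_nonempty hX hp1
  have hbdd : BddBelow {y : ℝ | p ≤ F y} := hSeq ▸ quantile_set_bddBelow hX hp0
  rw [quantileRV, hSeq, hF]
  constructor
  · intro h
    set q := sInf {y : ℝ | p ≤ F y} with hq
    have hq_le : p ≤ F q := by
      by_contra hlt
      push_neg at hlt
      have hev : ∀ᶠ y in nhdsWithin q (Ici q), F y < p :=
        (F.right_continuous q).eventually (eventually_lt_nhds hlt)
      obtain ⟨ε, hε, hsub⟩ := (mem_nhdsGE_iff_exists_Ico_subset).mp hev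
      obtain ⟨y, hyS, hyε⟩ := exists_lt_of_csInf_lt hne hε.out
      have hqy : q ≤ y := csInf_le hbdd hyS
      exact absurd hyS (by simpa using not_le.mpr (hsub ⟨hqy, hyε⟩))
    exact hq_le.trans (F.mono h)
  · intro h
    exact csInf_le hbdd h

end AuxGini

section AuxGini2

open ProbabilityTheory Filter Topology

lemma vol_Ioo_inter_Iic (t : ℝ) :
    volume (Ioo (0:ℝ) 1 ∩ Iic t) = ENNReal.ofReal (min t 1) := by
  rcases le_or_gt t 0 with ht | ht
  · have : Ioo (0:ℝ) 1 ∩ Iic t = ∅ := by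
      ext u; simp only [Set.mem_inter_iff, Set.mem_Ioo, Set.mem_Iic, Set.mem_empty_iff_false,
        iff_false]
      rintro ⟨⟨h1, _⟩, h3⟩; linarith
    rw [this]
    simp [ENNReal.ofReal_eq_zero, min_le_iff, ht, ENNReal.ofReal_of_nonpos ht]
  · rcases le_or_gt 1 t with ht1 | ht1
    · have : Ioo (0:ℝ) 1 ∩ Iic t = Ioo 0 1 := by
        ext u; simp only [Set.mem_inter_iff, Set.mem_Ioo, Set.mem_Iic, and_iff_left_iff_imp]
        rintro ⟨_, h2⟩; linarith
      rw [this, Real.volume_Ioo, min_eq_right ht1]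
      norm_num
    · have : Ioo (0:ℝ) 1 ∩ Iic t = Ioc 0 t := by
        ext u; simp only [Set.mem_inter_iff, Set.mem_Ioo, Set.mem_Iic, Set.mem_Ioc]
        constructor
        · rintro ⟨⟨h1, _⟩, h3⟩; exact ⟨h1, h3⟩
        · rintro ⟨h1, h2⟩; exact ⟨⟨h1, lt_of_le_of_lt h2 ht1⟩, h2⟩
      rw [this, Real.volume_Ioc, min_eq_left ht1.le]
      norm_num

variable {Ω : Type*} [MeasureSpace Ω] [IsProbabilityMeasure (volume : Measure Ω)]

lemma quantile_monotoneOn {X : Ω → ℝ} (hX : Measurable X) :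
    MonotoneOn (quantileRV X) (Ioo (0:ℝ) 1) := by
  intro u hu v hv huv
  exact csInf_le_csInf (quantile_set_bddBelow hX hu.1)
    (quantile_set_nonempty hX hv.2)
    (fun y hy => le_trans huv hy)

lemma quantile_aemeasurable {X : Ω → ℝ} (hX : Measurable X) :
    AEMeasurable (quantileRV X) (volume.restrict (Ioo (0:ℝ) 1)) :=
  aemeasurable_restrict_of_monotoneOn measurableSet_Ioo (quantile_monotoneOn hX)

instance : IsProbabilityMeasure (volume.restrict (Ioo (0:ℝ) 1)) := by
  constructor
  rw [Measure.restrict_apply MeasurableSet.univ, Set.univ_inter, Real.volume_Ioo]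
  norm_num

lemma map_quantile {X : Ω → ℝ} (hX : Measurable X) :
    Measure.map (quantileRV X) (volume.restrict (Ioo (0:ℝ) 1)) = Measure.map X volume := by
  have hprob : IsProbabilityMeasure (Measure.map X (volume : Measure Ω)) :=
    Measure.isProbabilityMeasure_map hX.aemeasurable
  have hQae := quantile_aemeasurable hX
  have hprob2 : IsProbabilityMeasure
      (Measure.map (quantileRV X) (volume.restrict (Ioo (0:ℝ) 1))) :=
    Measure.isProbabilityMeasure_map hQae
  refine Measure.ext_of_Iic _ _ (fun x => ?_)
  rw [Measure.map_apply_of_aemeasurable hQae measurableSet_Iic,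
    Measure.restrict_apply' measurableSet_Ioo]
  have hset : quantileRV X ⁻¹' Iic x ∩ Ioo 0 1 = Ioo (0:ℝ) 1 ∩ Iic (cdfRV X x) := by
    ext u
    simp only [Set.mem_inter_iff, Set.mem_preimage, Set.mem_Iic, Set.mem_Ioo]
    constructor
    · rintro ⟨h1, h2⟩
      exact ⟨h2, (quantile_galois hX h2.1 h2.2 x).mp h1⟩
    · rintro ⟨h2, h1⟩
      exact ⟨(quantile_galois hX h2.1 h2.2 x).mpr h1, h2⟩
  rw [hset, vol_Ioo_inter_Iic]
  have h0 : 0 ≤ cdfRV X x := ENNReal.toReal_nonneg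
  have h1 : cdfRV X x ≤ 1 := by
    rw [cdfRV_eq_cdf hX]; exact cdf_le_one _ _
  rw [min_eq_left h1, cdfRV_eq_cdf hX, ofReal_cdf]

lemma integral_comp_quantile {X : Ω → ℝ} (hX : Measurable X) {g : ℝ → ℝ}
    (hg : AEStronglyMeasurable g (Measure.map X volume)) :
    ∫ u in Ioo (0:ℝ) 1, g (quantileRV X u) = ∫ ω, g (X ω) := by
  rw [← integral_map (quantile_aemeasurable hX) (by rw [map_quantile hX]; exact hg),
    map_quantile hX, integral_map hX.aemeasurable hg]

lemma integrable_comp_quantile {X : Ω → ℝ} (hX : Measurable X) {g : ℝ → ℝ}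
    (hg : AEStronglyMeasurable g (Measure.map X volume))
    (hgi : Integrable (fun ω => g (X ω)) volume) :
    Integrable (fun u => g (quantileRV X u)) (volume.restrict (Ioo (0:ℝ) 1)) := by
  have h1 : Integrable g (Measure.map X volume) :=
    (integrable_map_measure hg hX.aemeasurable).mpr hgi
  rw [← map_quantile hX] at h1
  exact (integrable_map_measure (by rw [map_quantile hX]; exact hg)
    (quantile_aemeasurable hX)).mp h1

end AuxGini2

section AuxGini3

open ProbabilityTheory Filter Topology

lemma integrable_one_sub_two_mul :
    Integrable (fun u : ℝ => 1 - 2*u) (volume.restrict (Ioo (0:ℝ) 1)) :=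
  ((continuous_const.sub (continuous_const.mul continuous_id)).integrableOn_Icc).mono_set
    Ioo_subset_Icc_self

lemma int_one_sub_two_mul_Ioc {c : ℝ} (h0 : 0 ≤ c) :
    ∫ u in Ioc (0:ℝ) c, (1 - 2*u) = c - c^2 := by
  rw [← intervalIntegral.integral_of_le h0,
    intervalIntegral.integral_sub (continuous_const.intervalIntegrable 0 c)
      ((by fun_prop : Continuous fun u : ℝ => 2*u).intervalIntegrable 0 c),
    intervalIntegral.integral_const, intervalIntegral.integral_const_mul,
    integral_id, smul_eq_mul]
  ring

lemma I1 : ∫ u in Ioo (0:ℝ) 1, (1 - 2*u) = 0 := by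
  rw [← integral_Ioc_eq_integral_Ioo, int_one_sub_two_mul_Ioc zero_le_one]
  norm_num

lemma inner_int {c : ℝ} (h0 : 0 ≤ c) (h1 : c ≤ 1) :
    ∫ u in Ioo (0:ℝ) 1, (1 - 2*u) * (if u ≤ c then (1:ℝ) else 0) = c - c^2 := by
  have hfun : (fun u : ℝ => (1 - 2*u) * (if u ≤ c then (1:ℝ) else 0)) =
      (Iic c).indicator (fun u => 1 - 2*u) := by
    funext u
    by_cases h : u ≤ c <;> simp [Set.indicator, h]
  rw [hfun, integral_indicator measurableSet_Iic, Measure.restrict_restrict measurableSet_Iic]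
  have hae : (Iic c ∩ Ioo (0:ℝ) 1 : Set ℝ) =ᵐ[volume] Ioc (0:ℝ) c := by
    rcases lt_or_eq_of_le h1 with h1' | h1'
    · have hset : (Iic c ∩ Ioo (0:ℝ) 1 : Set ℝ) = Ioc (0:ℝ) c := by
        ext u
        simp only [Set.mem_inter_iff, Set.mem_Iic, Set.mem_Ioo, Set.mem_Ioc]
        constructor
        · rintro ⟨h2, h3, _⟩; exact ⟨h3, h2⟩
        · rintro ⟨h2, h3⟩; exact ⟨h3, h2, lt_of_le_of_lt h3 h1'⟩
      rw [hset]
      exact EventuallyEq.rfl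
    · subst h1'
      have : (Iic (1:ℝ) ∩ Ioo (0:ℝ) 1 : Set ℝ) = Ioo (0:ℝ) 1 := by
        ext u
        simp only [Set.mem_inter_iff, Set.mem_Iic, Set.mem_Ioo]
        exact ⟨fun h => h.2, fun h => ⟨h.2.le, h⟩⟩
      rw [this]
      exact Ioo_ae_eq_Ioc
  rw [setIntegral_congr_set hae, int_one_sub_two_mul_Ioc h0]

end AuxGini3

section AuxGini4

open ProbabilityTheory Filter Topology

lemma D_eq_neg {q : ℝ} (hq : q ≤ 0) :
    (fun x => (if q ≤ x then (1:ℝ) else 0) - (if (0:ℝ) ≤ x then 1 else 0)) =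
      (Ico q 0).indicator (fun _ => (1:ℝ)) := by
  funext x
  by_cases h1 : q ≤ x <;> by_cases h2 : (0:ℝ) ≤ x
  · simp [h1, h2, Set.indicator_apply, Set.mem_Ico, not_lt.mpr h2]
  · simp [h1, h2, Set.indicator_apply, Set.mem_Ico, not_le.mp h2]
  · exact absurd (le_trans hq h2) h1
  · simp [h1, h2, Set.indicator_apply, Set.mem_Ico]

lemma D_eq_pos {q : ℝ} (hq : 0 < q) :
    (fun x => (if q ≤ x then (1:ℝ) else 0) - (if (0:ℝ) ≤ x then 1 else 0)) =
      fun x => -((Ico (0:ℝ) q).indicator (fun _ => (1:ℝ)) x) := by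
  funext x
  by_cases h1 : q ≤ x <;> by_cases h2 : (0:ℝ) ≤ x
  · simp [h1, h2, Set.indicator_apply, Set.mem_Ico, not_lt.mpr h1]
  · exact absurd (le_trans hq.le h1) h2
  · simp [h1, h2, Set.indicator_apply, Set.mem_Ico, not_le.mp h1]
  · simp [h1, h2, Set.indicator_apply, Set.mem_Ico]

lemma int_D (q : ℝ) :
    ∫ x : ℝ, ((if q ≤ x then (1:ℝ) else 0) - (if (0:ℝ) ≤ x then 1 else 0)) = -q := by
  rcases le_or_gt q 0 with hq | hq
  · rw [D_eq_neg hq, integral_indicator measurableSet_Ico, setIntegral_const,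
      measureReal_def, Real.volume_Ico, smul_eq_mul, mul_one, ENNReal.toReal_ofReal (by linarith)]
    ring
  · rw [D_eq_pos hq]
    rw [integral_neg, integral_indicator measurableSet_Ico, setIntegral_const,
      measureReal_def, Real.volume_Ico, smul_eq_mul, mul_one, ENNReal.toReal_ofReal (by linarith)]
    ring

lemma lint_D (q : ℝ) :
    ∫⁻ x : ℝ, (‖(if q ≤ x then (1:ℝ) else 0) - (if (0:ℝ) ≤ x then 1 else 0)‖₊ : ENNReal) =
      ENNReal.ofReal |q| := by
  rcases le_or_gt q 0 with hq | hq
  · have hfun : (fun x : ℝ =>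
        (‖(if q ≤ x then (1:ℝ) else 0) - (if (0:ℝ) ≤ x then 1 else 0)‖₊ : ENNReal)) =
        (Ico q 0).indicator (fun _ => (1:ENNReal)) := by
      funext x
      rw [congrFun (D_eq_neg hq) x]
      by_cases h : x ∈ Ico q 0 <;> simp [Set.indicator_apply, h]
    rw [hfun, lintegral_indicator measurableSet_Ico, setLIntegral_one, Real.volume_Ico,
      abs_of_nonpos hq]
    norm_num
  · have hfun : (fun x : ℝ =>
        (‖(if q ≤ x then (1:ℝ) else 0) - (if (0:ℝ) ≤ x then 1 else 0)‖₊ : ENNReal)) =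
        (Ico (0:ℝ) q).indicator (fun _ => (1:ENNReal)) := by
      funext x
      rw [congrFun (D_eq_pos hq) x]
      by_cases h : x ∈ Ico (0:ℝ) q <;> simp [Set.indicator_apply, h]
    rw [hfun, lintegral_indicator measurableSet_Ico, setLIntegral_one, Real.volume_Ico,
      abs_of_pos hq]
    norm_num

end AuxGini4

section AuxGini5

open ProbabilityTheory Filter Topology Function

variable {Ω : Type*} [MeasureSpace Ω] [IsProbabilityMeasure (volume : Measure Ω)]

lemma cdfRV_nonneg (X : Ω → ℝ) (x : ℝ) : 0 ≤ cdfRV X x := ENNReal.toReal_nonneg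

lemma cdfRV_le_one {X : Ω → ℝ} (hX : Measurable X) (x : ℝ) : cdfRV X x ≤ 1 := by
  rw [cdfRV_eq_cdf hX]; exact cdf_le_one _ _

lemma quantile_integrable {X : Ω → ℝ} (hX : Measurable X) (hXi : Integrable X volume) :
    Integrable (fun u => quantileRV X u) (volume.restrict (Ioo (0:ℝ) 1)) :=
  integrable_comp_quantile hX (g := fun x => x) aestronglyMeasurable_id hXi

lemma gini_eq {X : Ω → ℝ} (hX : Measurable X) (hXi : Integrable X volume) :
    giniRV X = ∫ u in Ioo (0:ℝ) 1, (2*u - 1) * quantileRV X u := by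
  have hQae := quantile_aemeasurable hX
  set g : ℝ → ℝ := hQae.mk _ with hgdef
  have hgmeas : Measurable g := hQae.measurable_mk
  have hgae : quantileRV X =ᵐ[volume.restrict (Ioo (0:ℝ) 1)] g := hQae.ae_eq_mk
  have hQint := quantile_integrable hX hXi
  have hgint : Integrable g (volume.restrict (Ioo (0:ℝ) 1)) := hQint.congr hgae
  set f : ℝ → ℝ → ℝ := fun x u =>
    (1 - 2*u) * ((if g u ≤ x then (1:ℝ) else 0) - (if (0:ℝ) ≤ x then 1 else 0)) with hfdef
  -- (a) inner integral equals F - F²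
  have ha : ∀ x : ℝ, (∫ u in Ioo (0:ℝ) 1, f x u) = cdfRV X x - (cdfRV X x)^2 := by
    intro x
    have e1 : (∫ u in Ioo (0:ℝ) 1, f x u) = ∫ u in Ioo (0:ℝ) 1,
        (1 - 2*u) * ((if quantileRV X u ≤ x then (1:ℝ) else 0) -
          (if (0:ℝ) ≤ x then 1 else 0)) := by
      apply integral_congr_ae
      filter_upwards [hgae] with u hu
      rw [hfdef]
      simp only [← hu]
    have e2 : (∫ u in Ioo (0:ℝ) 1,
        (1 - 2*u) * ((if quantileRV X u ≤ x then (1:ℝ) else 0) -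
          (if (0:ℝ) ≤ x then 1 else 0))) = ∫ u in Ioo (0:ℝ) 1,
        ((1 - 2*u) * (if u ≤ cdfRV X x then (1:ℝ) else 0) -
          (1 - 2*u) * (if (0:ℝ) ≤ x then (1:ℝ) else 0)) := by
      apply setIntegral_congr_fun measurableSet_Ioo
      intro u hu
      have hgal := quantile_galois hX hu.1 hu.2 x
      dsimp only
      by_cases h : quantileRV X u ≤ x
      · rw [if_pos h, if_pos (hgal.mp h)]; ring
      · rw [if_neg h, if_neg (fun hc => h (hgal.mpr hc))]; ring
    have hint1 : Integrable (fun u : ℝ => (1 - 2*u) * (if u ≤ cdfRV X x then (1:ℝ) else 0))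
        (volume.restrict (Ioo (0:ℝ) 1)) := by
      have hfun : (fun u : ℝ => (1 - 2*u) * (if u ≤ cdfRV X x then (1:ℝ) else 0)) =
          (Iic (cdfRV X x)).indicator (fun u => 1 - 2*u) := by
        funext u
        by_cases h : u ≤ cdfRV X x <;> simp [Set.indicator, h]
      rw [hfun]
      exact integrable_one_sub_two_mul.indicator measurableSet_Iic
    have hint2 : Integrable (fun u : ℝ => (1 - 2*u) * (if (0:ℝ) ≤ x then (1:ℝ) else 0))
        (volume.restrict (Ioo (0:ℝ) 1)) := integrable_one_sub_two_mul.mul_const _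
    rw [e1, e2, integral_sub hint1 hint2,
      inner_int (cdfRV_nonneg X x) (cdfRV_le_one hX x)]
    have : (∫ u in Ioo (0:ℝ) 1, (1 - 2*u) * (if (0:ℝ) ≤ x then (1:ℝ) else 0)) =
        (∫ u in Ioo (0:ℝ) 1, (1 - 2*u)) * (if (0:ℝ) ≤ x then (1:ℝ) else 0) :=
      integral_mul_const _ _
    rw [this, I1, zero_mul, sub_zero]
  -- (b) integrability on the product
  have hmeas_uncurry : Measurable (uncurry f) := by
    apply Measurable.mul
    · exact measurable_const.sub (measurable_snd.const_mul 2)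
    · apply Measurable.sub
      · exact Measurable.ite (measurableSet_le (hgmeas.comp measurable_snd) measurable_fst)
          measurable_const measurable_const
      · exact Measurable.ite (measurableSet_le measurable_const measurable_fst)
          measurable_const measurable_const
  have hint : Integrable (uncurry f)
      ((volume : Measure ℝ).prod (volume.restrict (Ioo (0:ℝ) 1))) := by
    refine ⟨hmeas_uncurry.aestronglyMeasurable, ?_⟩
    rw [hasFiniteIntegral_def,
      lintegral_prod_symm' _ hmeas_uncurry.enorm]
    have hb : ∀ᵐ u ∂(volume.restrict (Ioo (0:ℝ) 1)),
        (∫⁻ x : ℝ, (‖f x u‖₊ : ENNReal)) ≤ (‖g u‖₊ : ENNReal) := by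
      filter_upwards [ae_restrict_mem measurableSet_Ioo] with u hu
      have e : ∀ x : ℝ, (‖f x u‖₊ : ENNReal) = (‖(1 - 2*u)‖₊ : ENNReal) *
          (‖(if g u ≤ x then (1:ℝ) else 0) - (if (0:ℝ) ≤ x then 1 else 0)‖₊ : ENNReal) := by
        intro x
        rw [hfdef]
        simp [nnnorm_mul, ENNReal.coe_mul]
      calc (∫⁻ x : ℝ, (‖f x u‖₊ : ENNReal))
          = (‖(1 - 2*u)‖₊ : ENNReal) * ∫⁻ x : ℝ,
            (‖(if g u ≤ x then (1:ℝ) else 0) - (if (0:ℝ) ≤ x then 1 else 0)‖₊ : ENNReal) := by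
            rw [← lintegral_const_mul _ (by
              have : Measurable (fun x : ℝ => (if g u ≤ x then (1:ℝ) else 0) -
                  (if (0:ℝ) ≤ x then 1 else 0)) := by
                apply Measurable.sub
                · exact Measurable.ite (measurableSet_le measurable_const measurable_id)
                    measurable_const measurable_const
                · exact Measurable.ite (measurableSet_le measurable_const measurable_id)
                    measurable_const measurable_const
              exact this.nnnorm.coe_nnreal_ennreal)]
            exact lintegral_congr fun x => e x
        _ = (‖(1 - 2*u)‖₊ : ENNReal) * ENNReal.ofReal |g u| := by rw [lint_D]
        _ ≤ 1 * ENNReal.ofReal |g u| := by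
            apply mul_le_mul_left
            have : |1 - 2*u| ≤ 1 := by
              rw [abs_le]; constructor <;> [linarith [hu.2]; linarith [hu.1]]
            rw [← ENNReal.ofReal_one]
            calc (‖(1 - 2*u)‖₊ : ENNReal) = ENNReal.ofReal |1 - 2*u| := by
                  rw [← Real.norm_eq_abs]; exact (ofReal_norm _).symm
              _ ≤ ENNReal.ofReal 1 := ENNReal.ofReal_le_ofReal this
        _ = (‖g u‖₊ : ENNReal) := by
            rw [one_mul, ← Real.norm_eq_abs]; exact ofReal_norm _
    calc (∫⁻ u in Ioo (0:ℝ) 1, ∫⁻ x : ℝ, (‖uncurry f (x, u)‖₊ : ENNReal))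
        ≤ ∫⁻ u in Ioo (0:ℝ) 1, (‖g u‖₊ : ENNReal) := lintegral_mono_ae hb
      _ < ⊤ := hgint.2
  -- (c) the x-integral for fixed u
  have hc : ∀ u : ℝ, (∫ x : ℝ, f x u) = (2*u - 1) * g u := by
    intro u
    have : (∫ x : ℝ, f x u) = (1 - 2*u) * ∫ x : ℝ,
        ((if g u ≤ x then (1:ℝ) else 0) - (if (0:ℝ) ≤ x then 1 else 0)) :=
      integral_const_mul _ _
    rw [this, int_D]
    ring
  -- conclusion
  rw [giniRV]
  calc (∫ x : ℝ, (cdfRV X x - cdfRV X x ^ 2))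
      = ∫ x : ℝ, ∫ u in Ioo (0:ℝ) 1, f x u := by
        exact integral_congr_ae (Eventually.of_forall fun x => (ha x).symm)
    _ = ∫ u in Ioo (0:ℝ) 1, ∫ x : ℝ, f x u := integral_integral_swap hint
    _ = ∫ u in Ioo (0:ℝ) 1, (2*u - 1) * g u :=
        integral_congr_ae (Eventually.of_forall fun u => hc u)
    _ = ∫ u in Ioo (0:ℝ) 1, (2*u - 1) * quantileRV X u := by
        apply integral_congr_ae
        filter_upwards [hgae] with u hu
        rw [hu]

end AuxGini5

section AuxGini6

open ProbabilityTheory Filter Topology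

lemma w_integrable : Integrable (fun u : ℝ => 2*u - 1) (volume.restrict (Ioo (0:ℝ) 1)) :=
  (((continuous_const.mul continuous_id).sub continuous_const).integrableOn_Icc).mono_set
    Ioo_subset_Icc_self

lemma wsq_integrable :
    Integrable (fun u : ℝ => (2*u - 1)^2) (volume.restrict (Ioo (0:ℝ) 1)) :=
  ((((continuous_const.mul continuous_id).sub continuous_const).pow 2).integrableOn_Icc).mono_set
    Ioo_subset_Icc_self

lemma mean_w : ∫ u in Ioo (0:ℝ) 1, (2*u - 1) = 0 := by
  have : (fun u : ℝ => 2*u - 1) = fun u => -(1 - 2*u) := by funext u; ring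
  rw [this, integral_neg, I1, neg_zero]

lemma sq_w : ∫ u in Ioo (0:ℝ) 1, (2*u - 1)^2 = 1/3 := by
  rw [← integral_Ioc_eq_integral_Ioo, ← intervalIntegral.integral_of_le zero_le_one]
  have h : (fun u : ℝ => (2*u - 1)^2) = fun u => 4*u^2 - (4*u - 1) := by funext u; ring
  rw [h, intervalIntegral.integral_sub
    ((by continuity : Continuous fun u : ℝ => 4*u^2).intervalIntegrable 0 1)
    ((by continuity : Continuous fun u : ℝ => 4*u - 1).intervalIntegrable 0 1),
    intervalIntegral.integral_sub
    ((by continuity : Continuous fun u : ℝ => 4*u).intervalIntegrable 0 1)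
    (continuous_const.intervalIntegrable 0 1),
    intervalIntegral.integral_const_mul, intervalIntegral.integral_const_mul,
    integral_pow, integral_id, intervalIntegral.integral_const, smul_eq_mul]
  norm_num

variable {Ω : Type*} [MeasureSpace Ω] [IsProbabilityMeasure (volume : Measure Ω)]

lemma gini_le_bound {X : Ω → ℝ} {μ σ : ℝ} (hXmem : X ∈ Vset μ σ) (hσ : 0 < σ) :
    giniRV X ≤ σ / Real.sqrt 3 := by
  obtain ⟨hX, hXi, hmean, hvar_i, hvar⟩ := hXmem
  rw [gini_eq hX hXi]
  set Q := quantileRV X with hQdef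
  have hQint : Integrable Q (volume.restrict (Ioo (0:ℝ) 1)) := quantile_integrable hX hXi
  have hcont : Continuous (fun x : ℝ => (x - μ)^2) := by continuity
  have hQsq_int : Integrable (fun u => (Q u - μ)^2) (volume.restrict (Ioo (0:ℝ) 1)) :=
    integrable_comp_quantile hX (g := fun x => (x - μ)^2)
      (hcont.aestronglyMeasurable) hvar_i
  have hQsq : ∫ u in Ioo (0:ℝ) 1, (Q u - μ)^2 = σ^2 := by
    rw [hQdef, integral_comp_quantile hX (g := fun x => (x - μ)^2) hcont.aestronglyMeasurable,
      hvar]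
  have hf_int : Integrable (fun u => Q u - μ) (volume.restrict (Ioo (0:ℝ) 1)) :=
    hQint.sub (integrable_const μ)
  have hfw_int : Integrable (fun u => (Q u - μ) * (2*u - 1)) (volume.restrict (Ioo (0:ℝ) 1)) := by
    have hmeas2 : AEStronglyMeasurable (fun u => (Q u - μ) * (2*u - 1))
        (volume.restrict (Ioo (0:ℝ) 1)) :=
      hf_int.1.mul (((continuous_const.mul continuous_id').sub
        continuous_const).aestronglyMeasurable)
    apply Integrable.mono' hf_int.abs hmeas2
    filter_upwards [ae_restrict_mem measurableSet_Ioo] with u hu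
    have h1 : |2*u - 1| ≤ 1 := by rw [abs_le]; constructor <;> [linarith [hu.1]; linarith [hu.2]]
    rw [Real.norm_eq_abs, abs_mul]
    calc |Q u - μ| * |2*u-1| ≤ |Q u - μ| * 1 :=
          mul_le_mul_of_nonneg_left h1 (abs_nonneg _)
      _ = |Q u - μ| := mul_one _
  set C := ∫ u in Ioo (0:ℝ) 1, (Q u - μ) * (2*u - 1) with hCdef
  have hgini_val : ∫ u in Ioo (0:ℝ) 1, (2*u - 1) * Q u = C := by
    have e : ∀ u : ℝ, (2*u - 1) * Q u = (Q u - μ) * (2*u - 1) + μ * (2*u - 1) := by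
      intro u; ring
    rw [integral_congr_ae (Eventually.of_forall e),
      integral_add hfw_int (w_integrable.const_mul μ), integral_const_mul, mean_w]
    simp [hCdef]
  rw [hgini_val]
  have key : (0:ℝ) ≤ ∫ u in Ioo (0:ℝ) 1, ((1/3) * (Q u - μ) - C * (2*u - 1))^2 :=
    integral_nonneg fun u => sq_nonneg _
  have expand : ∫ u in Ioo (0:ℝ) 1, ((1/3) * (Q u - μ) - C * (2*u - 1))^2 =
      (1/9) * σ^2 - (2/3*C) * C + C^2 * (1/3) := by
    have e : ∀ u : ℝ, ((1/3) * (Q u - μ) - C * (2*u - 1))^2 =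
        ((1/9) * (Q u - μ)^2 - (2/3*C) * ((Q u - μ) * (2*u - 1))) + C^2 * (2*u - 1)^2 := by
      intro u; ring
    have i3 : Integrable (fun u : ℝ => 1/9 * (Q u - μ)^2) (volume.restrict (Ioo (0:ℝ) 1)) :=
      hQsq_int.const_mul _
    have i4 : Integrable (fun u : ℝ => 2/3*C*((Q u - μ)*(2*u - 1)))
        (volume.restrict (Ioo (0:ℝ) 1)) := hfw_int.const_mul _
    have i1 : Integrable (fun u : ℝ => 1/9 * (Q u - μ)^2 - 2/3*C*((Q u - μ)*(2*u - 1)))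
        (volume.restrict (Ioo (0:ℝ) 1)) := i3.sub i4
    have i2 : Integrable (fun u : ℝ => C^2 * (2*u - 1)^2)
        (volume.restrict (Ioo (0:ℝ) 1)) := wsq_integrable.const_mul _
    rw [integral_congr_ae (Eventually.of_forall e), integral_add i1 i2,
      integral_sub i3 i4,
      integral_const_mul, integral_const_mul, integral_const_mul, hQsq, sq_w, hCdef]
  have hC2 : C^2 ≤ σ^2 / 3 := by nlinarith [key, expand]
  calc C ≤ |C| := le_abs_self C
    _ = Real.sqrt (C^2) := (Real.sqrt_sq_eq_abs C).symm
    _ ≤ Real.sqrt (σ^2/3) := Real.sqrt_le_sqrt hC2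
    _ = σ / Real.sqrt 3 := by
        rw [Real.sqrt_div (sq_nonneg σ), Real.sqrt_sq hσ.le]

end AuxGini6

section AuxGini7

open ProbabilityTheory Filter Topology

lemma convexOn_congr' {s : Set ℝ} {f g : ℝ → ℝ} (h : ConvexOn ℝ s f)
    (hfg : ∀ x ∈ s, f x = g x) : ConvexOn ℝ s g := by
  refine ⟨h.1, fun x hx y hy α β hα hβ hs => ?_⟩
  rw [← hfg _ hx, ← hfg _ hy, ← hfg _ (h.1 hx hy hα hβ hs)]
  exact h.2 hx hy hα hβ hs

lemma concaveOn_congr' {s : Set ℝ} {f g : ℝ → ℝ} (h : ConcaveOn ℝ s f)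
    (hfg : ∀ x ∈ s, f x = g x) : ConcaveOn ℝ s g := by
  refine ⟨h.1, fun x hx y hy α β hα hβ hs => ?_⟩
  rw [← hfg _ hx, ← hfg _ hy, ← hfg _ (h.1 hx hy hα hβ hs)]
  exact h.2 hx hy hα hβ hs

lemma reflection_fixes : Measure.map (fun u : ℝ => 1 - u) (volume.restrict (Ioo (0:ℝ) 1)) =
    volume.restrict (Ioo (0:ℝ) 1) := by
  have h1 : Measure.map (fun u : ℝ => 1 - u) (volume : Measure ℝ) = volume :=
    Measure.map_sub_left_eq_self (volume : Measure ℝ) 1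
  have h2 : (fun u : ℝ => 1 - u) ⁻¹' (Ioo (0:ℝ) 1) = Ioo (0:ℝ) 1 := by
    ext u
    simp only [Set.mem_preimage, Set.mem_Ioo]
    constructor <;> (rintro ⟨hl, hr⟩; constructor <;> linarith)
  conv_rhs => rw [← h1]
  rw [Measure.restrict_map (by fun_prop) measurableSet_Ioo, h2]

variable {Ω : Type*} [MeasureSpace Ω] [IsProbabilityMeasure (volume : Measure Ω)]
variable {U : Ω → ℝ}

lemma U_comp_integrable (hU : Measurable U)
    (hmap : Measure.map U volume = volume.restrict (Ioo (0:ℝ) 1)) {g : ℝ → ℝ}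
    (hg : AEStronglyMeasurable g (volume.restrict (Ioo (0:ℝ) 1)))
    (hgi : Integrable g (volume.restrict (Ioo (0:ℝ) 1))) :
    Integrable (fun ω => g (U ω)) volume :=
  (integrable_map_measure (by rw [hmap]; exact hg) hU.aemeasurable).mp (by rw [hmap]; exact hgi)

lemma U_comp_integral (hU : Measurable U)
    (hmap : Measure.map U volume = volume.restrict (Ioo (0:ℝ) 1)) {g : ℝ → ℝ}
    (hg : AEStronglyMeasurable g (volume.restrict (Ioo (0:ℝ) 1))) :
    ∫ ω, g (U ω) = ∫ u in Ioo (0:ℝ) 1, g u := by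
  rw [← integral_map hU.aemeasurable (by rw [hmap]; exact hg), hmap]

lemma cdf_Xs (hU : Measurable U)
    (hmap : Measure.map U volume = volume.restrict (Ioo (0:ℝ) 1)) {μ σ : ℝ} (hσ : 0 < σ)
    (x : ℝ) :
    cdfRV (fun ω => μ + Real.sqrt 3 * σ * (2 * U ω - 1)) x =
      max (min ((x - (μ - Real.sqrt 3 * σ)) / (2 * Real.sqrt 3 * σ)) 1) 0 := by
  have hs3 : 0 < Real.sqrt 3 := Real.sqrt_pos.mpr (by norm_num)
  have hb : 0 < 2 * Real.sqrt 3 * σ := by positivity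
  set a := μ - Real.sqrt 3 * σ with hadef
  set b := 2 * Real.sqrt 3 * σ with hbdef
  set t := (x - a) / b with htdef
  have hset : {ω | μ + Real.sqrt 3 * σ * (2 * U ω - 1) ≤ x} = U ⁻¹' (Iic t) := by
    ext ω
    simp only [Set.mem_setOf_eq, Set.mem_preimage, Set.mem_Iic, htdef, le_div_iff₀ hb, hadef,
      hbdef, le_div_iff₀ (by positivity : (0:ℝ) < 2 * Real.sqrt 3 * σ)]
    constructor <;> intro h <;> nlinarith
  rw [cdfRV, hset, ← Measure.map_apply hU measurableSet_Iic, hmap,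
    Measure.restrict_apply' measurableSet_Ioo, Set.inter_comm, vol_Ioo_inter_Iic,
    ENNReal.toReal_ofReal']

lemma quantile_Xs (hU : Measurable U)
    (hmap : Measure.map U volume = volume.restrict (Ioo (0:ℝ) 1)) {μ σ : ℝ} (hσ : 0 < σ)
    {u : ℝ} (hu : u ∈ Ioo (0:ℝ) 1) :
    quantileRV (fun ω => μ + Real.sqrt 3 * σ * (2 * U ω - 1)) u =
      μ + Real.sqrt 3 * σ * (2*u - 1) := by
  have hs3 : 0 < Real.sqrt 3 := Real.sqrt_pos.mpr (by norm_num)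
  have hb : 0 < 2 * Real.sqrt 3 * σ := by positivity
  set a := μ - Real.sqrt 3 * σ with hadef
  set b := 2 * Real.sqrt 3 * σ with hbdef
  have hset : {x : ℝ | u ≤ cdfRV (fun ω => μ + Real.sqrt 3 * σ * (2 * U ω - 1)) x} =
      Ici (a + b * u) := by
    ext x
    rw [Set.mem_setOf_eq, cdf_Xs hU hmap hσ x, Set.mem_Ici]
    constructor
    · intro h
      rcases le_or_gt (min ((x - a) / b) 1) 0 with hm | hm
      · rw [max_eq_right hm] at h; linarith [hu.1]
      · rw [max_eq_left hm.le] at h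
        have : u ≤ (x - a) / b := le_trans h (min_le_left _ _)
        rw [le_div_iff₀ hb] at this
        linarith
    · intro h
      have ht : u ≤ (x - a) / b := by
        rw [le_div_iff₀ hb]; linarith
      have : u ≤ min ((x - a) / b) 1 := le_min ht hu.2.le
      exact le_trans this (le_max_left _ _)
  rw [quantileRV, hset, csInf_Ici, hadef, hbdef]
  ring

lemma Xs_mem_Vset (hU : Measurable U)
    (hmap : Measure.map U volume = volume.restrict (Ioo (0:ℝ) 1)) {μ σ : ℝ} (hσ : 0 < σ) :
    (fun ω => μ + Real.sqrt 3 * σ * (2 * U ω - 1)) ∈ Vset μ σ := by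
  have hs3 : 0 < Real.sqrt 3 := Real.sqrt_pos.mpr (by norm_num)
  have hsq : Real.sqrt 3 * Real.sqrt 3 = 3 := Real.mul_self_sqrt (by norm_num)
  have hcont1 : Continuous (fun u : ℝ => μ + Real.sqrt 3 * σ * (2 * u - 1)) := by continuity
  have hcont2 : Continuous (fun u : ℝ => (μ + Real.sqrt 3 * σ * (2 * u - 1) - μ) ^ 2) := by
    continuity
  have hint1 : Integrable (fun u : ℝ => μ + Real.sqrt 3 * σ * (2 * u - 1))
      (volume.restrict (Ioo (0:ℝ) 1)) :=
    (hcont1.integrableOn_Icc).mono_set Ioo_subset_Icc_self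
  have hint2 : Integrable (fun u : ℝ => (μ + Real.sqrt 3 * σ * (2 * u - 1) - μ) ^ 2)
      (volume.restrict (Ioo (0:ℝ) 1)) :=
    (hcont2.integrableOn_Icc).mono_set Ioo_subset_Icc_self
  refine ⟨by fun_prop, ?_, ?_, ?_, ?_⟩
  · exact U_comp_integrable hU hmap hcont1.aestronglyMeasurable hint1
  · rw [U_comp_integral hU hmap hcont1.aestronglyMeasurable]
    have e : ∀ u : ℝ, μ + Real.sqrt 3 * σ * (2 * u - 1) =
        μ + Real.sqrt 3 * σ * (2 * u - 1) := fun _ => rfl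
    have : (∫ u in Ioo (0:ℝ) 1, (μ + Real.sqrt 3 * σ * (2 * u - 1))) =
        (∫ u in Ioo (0:ℝ) 1, (μ : ℝ)) + ∫ u in Ioo (0:ℝ) 1, Real.sqrt 3 * σ * (2 * u - 1) := by
      rw [← integral_add (integrable_const μ) (w_integrable.const_mul _)]
    rw [this, integral_const_mul, mean_w, integral_const]
    simp
  · exact U_comp_integrable hU hmap hcont2.aestronglyMeasurable hint2
  · rw [U_comp_integral hU hmap hcont2.aestronglyMeasurable]
    have e : ∀ u : ℝ, (μ + Real.sqrt 3 * σ * (2 * u - 1) - μ) ^ 2 =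
        (3 * σ^2) * (2*u - 1)^2 := by
      intro u; nlinarith [hsq, sq_nonneg (2*u-1)]
    rw [integral_congr_ae (Eventually.of_forall e), integral_const_mul, sq_w]
    ring

lemma Xs_symm (hU : Measurable U)
    (hmap : Measure.map U volume = volume.restrict (Ioo (0:ℝ) 1)) {μ σ : ℝ} (hσ : 0 < σ) :
    SymmAbout (fun ω => μ + Real.sqrt 3 * σ * (2 * U ω - 1)) μ := by
  rw [SymmAbout]
  have hf : Measurable (fun v : ℝ => Real.sqrt 3 * σ * (2 * v - 1)) := by fun_prop
  have hr : Measurable (fun v : ℝ => 1 - v) := by fun_prop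
  have e1 : (fun ω => (μ + Real.sqrt 3 * σ * (2 * U ω - 1)) - μ) =
      (fun v : ℝ => Real.sqrt 3 * σ * (2 * v - 1)) ∘ U := by
    funext ω; simp only [Function.comp_apply]; ring
  have e2 : (fun ω => μ - (μ + Real.sqrt 3 * σ * (2 * U ω - 1))) =
      ((fun v : ℝ => Real.sqrt 3 * σ * (2 * v - 1)) ∘ (fun v : ℝ => 1 - v)) ∘ U := by
    funext ω; simp only [Function.comp_apply]; ring
  rw [e1, e2, ← Measure.map_map hf hU, ← Measure.map_map (hf.comp hr) hU, hmap,
    ← Measure.map_map hf hr, reflection_fixes]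

lemma Xs_unimodal (hU : Measurable U)
    (hmap : Measure.map U volume = volume.restrict (Ioo (0:ℝ) 1)) {μ σ : ℝ} (hσ : 0 < σ) :
    Unimodal (fun ω => μ + Real.sqrt 3 * σ * (2 * U ω - 1)) := by
  have hs3 : 0 < Real.sqrt 3 := Real.sqrt_pos.mpr (by norm_num)
  have hb : 0 < 2 * Real.sqrt 3 * σ := by positivity
  set a := μ - Real.sqrt 3 * σ with hadef
  set b := 2 * Real.sqrt 3 * σ with hbdef
  refine ⟨a, ?_, ?_⟩
  · apply convexOn_congr' (convexOn_const (0:ℝ) (convex_Iio a))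
    intro x hx
    rw [cdf_Xs hU hmap hσ x]
    have ht : (x - a) / b < 0 := div_neg_of_neg_of_pos (by simp only [Set.mem_Iio] at hx; linarith) hb
    rw [min_eq_left (by linarith : (x - a)/b ≤ 1), max_eq_right ht.le]
  · have haff : ConcaveOn ℝ (Ioi a) (fun x : ℝ => (x - a) / b) := by
      refine ⟨convex_Ioi a, fun x hx y hy α β hα hβ hs => ?_⟩
      apply le_of_eq
      simp only [smul_eq_mul]
      field_simp
      linear_combination (Real.sqrt 3 * σ - μ) * hs
    have hconst : ConcaveOn ℝ (Ioi a) (fun _ : ℝ => (1:ℝ)) := concaveOn_const 1 (convex_Ioi a)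
    apply concaveOn_congr' (haff.inf hconst)
    intro x hx
    rw [cdf_Xs hU hmap hσ x]
    have ht : 0 < (x - a) / b := div_pos (by simp only [Set.mem_Ioi] at hx; linarith) hb
    have : (0:ℝ) < min ((x - a)/b) 1 := lt_min ht one_pos
    rw [max_eq_left this.le]
    simp [Pi.inf_apply, min_def]

end AuxGini7

section AuxGini8

open ProbabilityTheory Filter Topology

variable {Ω : Type*} [MeasureSpace Ω] [IsProbabilityMeasure (volume : Measure Ω)]
variable {U : Ω → ℝ}

lemma gini_Xs (hU : Measurable U)
    (hmap : Measure.map U volume = volume.restrict (Ioo (0:ℝ) 1)) {μ σ : ℝ} (hσ : 0 < σ) :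
    giniRV (fun ω => μ + Real.sqrt 3 * σ * (2 * U ω - 1)) = σ / Real.sqrt 3 := by
  have hs3 : 0 < Real.sqrt 3 := Real.sqrt_pos.mpr (by norm_num)
  have hsq : Real.sqrt 3 * Real.sqrt 3 = 3 := Real.mul_self_sqrt (by norm_num)
  obtain ⟨hX, hXi, -, -, -⟩ := Xs_mem_Vset hU hmap hσ
  rw [gini_eq hX hXi]
  have e : EqOn (fun u : ℝ => (2*u - 1) * quantileRV (fun ω => μ + Real.sqrt 3 * σ * (2 * U ω - 1)) u)
      (fun u : ℝ => μ * (2*u - 1) + Real.sqrt 3 * σ * (2*u - 1)^2) (Ioo (0:ℝ) 1) := by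
    intro u hu
    dsimp only
    rw [quantile_Xs hU hmap hσ hu]
    ring
  rw [setIntegral_congr_fun measurableSet_Ioo e,
    integral_add (w_integrable.const_mul μ) (wsq_integrable.const_mul _),
    integral_const_mul, integral_const_mul, mean_w, sq_w, mul_zero, zero_add,
    eq_div_iff (ne_of_gt hs3)]
  linear_combination (σ/3) * hsq

end AuxGini8

theorem stmt_17' {Ω : Type*} [MeasureSpace Ω] [IsProbabilityMeasure (volume : Measure Ω)]
    (hrich : Rich Ω) (μ σ : ℝ) (hσ : 0 < σ) :
    sSup (giniRV '' (VS μ σ : Set (Ω → ℝ))) = σ / Real.sqrt 3 ∧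
    sSup (giniRV '' (VU μ σ : Set (Ω → ℝ))) = σ / Real.sqrt 3 ∧
    sSup (giniRV '' (VSU μ σ : Set (Ω → ℝ))) = σ / Real.sqrt 3 ∧
    ∃ X ∈ (VS μ σ : Set (Ω → ℝ)),
      (∀ u ∈ Ioo (0:ℝ) 1, quantileRV X u = μ + Real.sqrt 3 * σ * (2*u - 1)) ∧
      giniRV X = σ / Real.sqrt 3 := by
  obtain ⟨U, hU, hmap⟩ := hrich
  set Xs : Ω → ℝ := fun ω => μ + Real.sqrt 3 * σ * (2 * U ω - 1) with hXsdef
  have hmem : Xs ∈ Vset μ σ := Xs_mem_Vset hU hmap hσ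
  have hsym : SymmAbout Xs μ := Xs_symm hU hmap hσ
  have huni : Unimodal Xs := Xs_unimodal hU hmap hσ
  have hgini : giniRV Xs = σ / Real.sqrt 3 := gini_Xs hU hmap hσ
  have hmemVS : Xs ∈ (VS μ σ : Set (Ω → ℝ)) := ⟨hmem, hsym⟩
  have hmemVU : Xs ∈ (VU μ σ : Set (Ω → ℝ)) := ⟨hmem, huni⟩
  have hmemVSU : Xs ∈ (VSU μ σ : Set (Ω → ℝ)) := ⟨hmem, hsym, huni⟩
  have hubS : ∀ y ∈ giniRV '' (VS μ σ : Set (Ω → ℝ)), y ≤ σ / Real.sqrt 3 := by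
    rintro y ⟨X, hXmem, rfl⟩; exact gini_le_bound hXmem.1 hσ
  have hubU : ∀ y ∈ giniRV '' (VU μ σ : Set (Ω → ℝ)), y ≤ σ / Real.sqrt 3 := by
    rintro y ⟨X, hXmem, rfl⟩; exact gini_le_bound hXmem.1 hσ
  have hubSU : ∀ y ∈ giniRV '' (VSU μ σ : Set (Ω → ℝ)), y ≤ σ / Real.sqrt 3 := by
    rintro y ⟨X, hXmem, rfl⟩; exact gini_le_bound hXmem.1 hσ
  have himgS : σ / Real.sqrt 3 ∈ giniRV '' (VS μ σ : Set (Ω → ℝ)) := ⟨Xs, hmemVS, hgini⟩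
  have himgU : σ / Real.sqrt 3 ∈ giniRV '' (VU μ σ : Set (Ω → ℝ)) := ⟨Xs, hmemVU, hgini⟩
  have himgSU : σ / Real.sqrt 3 ∈ giniRV '' (VSU μ σ : Set (Ω → ℝ)) := ⟨Xs, hmemVSU, hgini⟩
  refine ⟨le_antisymm (csSup_le ⟨_, himgS⟩ hubS) (le_csSup ⟨_, hubS⟩ himgS),
    le_antisymm (csSup_le ⟨_, himgU⟩ hubU) (le_csSup ⟨_, hubU⟩ himgU),
    le_antisymm (csSup_le ⟨_, himgSU⟩ hubSU) (le_csSup ⟨_, hubSU⟩ himgSU),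
    Xs, hmemVS, fun u hu => quantile_Xs hU hmap hσ hu, hgini⟩


/-- Worst-case Gini mean semi-difference: it equals `σ/√3` over symmetric, unimodal and
symmetric-unimodal distributions with given mean and variance, attained over `V_S` by
the uniform distribution on `[μ - √3 σ, μ + √3 σ]`. -/
theorem stmt_17 {Ω : Type*} [MeasureSpace Ω] [IsProbabilityMeasure (volume : Measure Ω)]
    (hrich : Rich Ω) (μ σ : ℝ) (hσ : 0 < σ) :
    sSup (giniRV '' (VS μ σ : Set (Ω → ℝ))) = σ / Real.sqrt 3 ∧
    sSup (giniRV '' (VU μ σ : Set (Ω → ℝ))) = σ / Real.sqrt 3 ∧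
    sSup (giniRV '' (VSU μ σ : Set (Ω → ℝ))) = σ / Real.sqrt 3 ∧
    ∃ X ∈ (VS μ σ : Set (Ω → ℝ)),
      (∀ u ∈ Ioo (0:ℝ) 1, quantileRV X u = μ + Real.sqrt 3 * σ * (2*u - 1)) ∧
      giniRV X = σ / Real.sqrt 3 := by
  exact stmt_17' hrich μ σ hσ
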